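/- Let F be a face of a complexified toric arrangement A and let Y_F := {(Y,C) : Y a layer with F ⊆ Y, C a chamber of the central arrangement A[Y] with X(Y,C) = Y}. Then the map ξ_F : Y_F → T(A[F]) given by ξ_F(Y,C) = μ[A[Y], A[F]](C) is a bijection, with inverse sending a chamber C of A[F] to (X_C, σ_{A[X_C]}(C)). -/

import Mathlib

open Matrix

/-!
STATEMENT 12: For a face F of a complexified toric arrangement, the map
ξ_F : Y_F → T(A[F]), (Y,C) ↦ μ[A[Y],A[F]](C) is a bijection with inverse
C ↦ (X_C, σ_{A[X_C]}(C)).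

We use the local model: the layers Y ⊇ F of the toric arrangement correspond
bijectively (via Y ↦ Ỹ) to the flats of the central hyperplane arrangement A[F], and
for (Y,C) ∈ Y_F the condition X(Y,C) = Y says that the critical flat of C in A[Y] is
the center ⋂ A[Y].  Thus A := A[F] is a finite central real arrangement, layers are
flats X of A with local arrangements A_X, and the statement reads: the map
(X, C) ↦ μ[A_X, A](C), defined on pairs where C ∈ T(A_X) has critical flat equal to
the center of A_X (wrt the induced linear extension), is a bijection onto T(A) with
inverse C ↦ (X_C, σ_{A_{X_C}}(C)).  The bijection is expressed by the two
composition identities below.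
-/

abbrev HypPair (d : ℕ) := (Fin d → ℝ) × ℝ

def hypSet {d : ℕ} (p : HypPair d) : Set (Fin d → ℝ) := {x | p.1 ⬝ᵥ x = p.2}

def hypComplementS {d : ℕ} (S : Set (HypPair d)) : Set (Fin d → ℝ) :=
  {x | ∀ p ∈ S, p.1 ⬝ᵥ x ≠ p.2}

def IsChamberS {d : ℕ} (S : Set (HypPair d)) (C : Set (Fin d → ℝ)) : Prop :=
  ∃ x ∈ hypComplementS S, C = connectedComponentIn (hypComplementS S) x

abbrev ChamberS {d : ℕ} (S : Set (HypPair d)) := {C : Set (Fin d → ℝ) // IsChamberS S C}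

def Separates {d : ℕ} (p : HypPair d) (C₁ C₂ : Set (Fin d → ℝ)) : Prop :=
  ∃ x ∈ C₁, ∃ y ∈ C₂, (p.1 ⬝ᵥ x - p.2) * (p.1 ⬝ᵥ y - p.2) < 0

def IsFlatS {d : ℕ} (S : Set (HypPair d)) (X : Set (Fin d → ℝ)) : Prop :=
  ∃ T : Set (HypPair d), T ⊆ S ∧ X = ⋂ p ∈ T, hypSet p

/-- The subarrangement A_X of hyperplanes containing `X`. -/
def subArr {d : ℕ} (S : Set (HypPair d)) (X : Set (Fin d → ℝ)) : Set (HypPair d) :=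
  {p | p ∈ S ∧ X ⊆ hypSet p}

/-- The center ⋂ A_X of the subarrangement A_X. -/
def centerOf {d : ℕ} (S : Set (HypPair d)) (X : Set (Fin d → ℝ)) : Set (Fin d → ℝ) :=
  ⋂ p ∈ subArr S X, hypSet p

/-- `X` is the critical intersection `X_C` of the chamber `C` of the arrangement `S`,
with respect to the linear extension `r`: `X` is the (reverse-inclusion) least flat
such that every chamber preceding `C` is separated from `C` by a hyperplane
containing `X`. -/
def IsCrit {d : ℕ} (S : Set (HypPair d)) (r : ChamberS S → ChamberS S → Prop)
    (C : ChamberS S) (X : Set (Fin d → ℝ)) : Prop :=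
  (IsFlatS S X ∧ ∀ C' : ChamberS S, r C' C → C' ≠ C →
      ∃ p ∈ S, X ⊆ hypSet p ∧ Separates p C.1 C'.1) ∧
  ∀ Y : Set (Fin d → ℝ),
    (IsFlatS S Y ∧ ∀ C' : ChamberS S, r C' C → C' ≠ C →
        ∃ p ∈ S, Y ⊆ hypSet p ∧ Separates p C.1 C'.1) → Y ⊆ X

def sepSetS {d : ℕ} (S : Set (HypPair d)) (C₁ C₂ : Set (Fin d → ℝ)) : Set (HypPair d) :=
  {p | p ∈ S ∧ Separates p C₁ C₂}

lemma chamber_ne {d : ℕ} {S : Set (HypPair d)} (C : ChamberS S) : C.1.Nonempty := by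
  obtain ⟨x, hx, hC⟩ := C.2
  exact ⟨x, hC ▸ mem_connectedComponentIn hx⟩

lemma chamber_eq {d : ℕ} {S : Set (HypPair d)} (C₁ C₂ : ChamberS S) {z : Fin d → ℝ}
    (h1 : z ∈ C₁.1) (h2 : z ∈ C₂.1) : C₁ = C₂ := by
  obtain ⟨x, hx, hC1⟩ := C₁.2
  obtain ⟨y, hy, hC2⟩ := C₂.2
  apply Subtype.ext
  rw [hC1] at h1 ⊢; rw [hC2] at h2 ⊢
  rw [connectedComponentIn_eq h1, connectedComponentIn_eq h2]

lemma signConst {d : ℕ} {S : Set (HypPair d)} (C : ChamberS S) {p : HypPair d}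
    (hp : p ∈ S) : ∀ x ∈ C.1, ∀ y ∈ C.1,
    0 < (p.1 ⬝ᵥ x - p.2) * (p.1 ⬝ᵥ y - p.2) := by
  obtain ⟨x₀, hx₀, hC⟩ := C.2
  have hsub : C.1 ⊆ hypComplementS S := hC ▸ connectedComponentIn_subset _ _
  have hconn : IsPreconnected C.1 := by
    rw [hC]; exact (isConnected_connectedComponentIn_iff.mpr hx₀).isPreconnected
  have hcont : Continuous fun z : Fin d → ℝ => p.1 ⬝ᵥ z - p.2 := by
    unfold dotProduct
    exact (continuous_finset_sum _ fun i _ =>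
      (continuous_const.mul (continuous_apply i))).sub continuous_const
  intro x hx y hy
  have hx0 : p.1 ⬝ᵥ x - p.2 ≠ 0 := sub_ne_zero.mpr (hsub hx p hp)
  have hy0 : p.1 ⬝ᵥ y - p.2 ≠ 0 := sub_ne_zero.mpr (hsub hy p hp)
  by_contra hle
  push_neg at hle
  have himg : IsPreconnected ((fun z : Fin d → ℝ => p.1 ⬝ᵥ z - p.2) '' C.1) :=
    hconn.image _ hcont.continuousOn
  have key : (0:ℝ) ∈ (fun z : Fin d → ℝ => p.1 ⬝ᵥ z - p.2) '' C.1 := by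
    rcases lt_or_gt_of_ne hx0 with h | h
    · have hy' : 0 < p.1 ⬝ᵥ y - p.2 := by
        rcases lt_or_gt_of_ne hy0 with h' | h'
        · nlinarith
        · exact h'
      exact himg.Icc_subset ⟨x, hx, rfl⟩ ⟨y, hy, rfl⟩ ⟨le_of_lt h, le_of_lt hy'⟩
    · have hy' : p.1 ⬝ᵥ y - p.2 < 0 := by
        rcases lt_or_gt_of_ne hy0 with h' | h'
        · exact h'
        · nlinarith
      exact himg.Icc_subset ⟨y, hy, rfl⟩ ⟨x, hx, rfl⟩ ⟨le_of_lt hy', le_of_lt h⟩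
  obtain ⟨z, hz, hz0⟩ := key
  exact hsub hz p hp (sub_eq_zero.mp hz0)

lemma sep_down {d : ℕ} {S : Set (HypPair d)} {p : HypPair d} (hp : p ∈ S)
    (C D : ChamberS S) {M N : Set (Fin d → ℝ)} (hM : M ⊆ C.1) (hN : N ⊆ D.1)
    (hMne : M.Nonempty) (hNne : N.Nonempty)
    (h : Separates p C.1 D.1) : Separates p M N := by
  obtain ⟨x, hxC, y, hyD, hxy⟩ := h
  obtain ⟨m, hm⟩ := hMne
  obtain ⟨n, hn⟩ := hNne
  refine ⟨m, hm, n, hn, ?_⟩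
  have h1 := signConst C hp x hxC m (hM hm)
  have h2 := signConst D hp y hyD n (hN hn)
  nlinarith [mul_pos h1 h2]

lemma sep_up {d : ℕ} {p : HypPair d} {M N C D : Set (Fin d → ℝ)}
    (h : Separates p M N) (hM : M ⊆ C) (hN : N ⊆ D) : Separates p C D := by
  obtain ⟨x, hx, y, hy, hxy⟩ := h
  exact ⟨x, hM hx, y, hN hy, hxy⟩

lemma center_eq {d : ℕ} {S : Set (HypPair d)} {X : Set (Fin d → ℝ)} (h : IsFlatS S X) :
    centerOf S X = X := by
  obtain ⟨T, hTS, rfl⟩ := h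
  apply Set.Subset.antisymm
  · exact Set.biInter_subset_biInter_left fun p hp =>
      ⟨hTS hp, Set.biInter_subset_of_mem hp⟩
  · exact Set.subset_iInter₂ fun p hp => hp.2

theorem stmt12 {d : ℕ} (A : Finset (HypPair d))
    (hcentral : ∀ p ∈ A, p.2 = 0)
    (B : ChamberS (↑A : Set (HypPair d)))
    (r : ChamberS (↑A : Set (HypPair d)) → ChamberS (↑A : Set (HypPair d)) → Prop)
    (hr : IsLinearOrder _ r)
    (hext : ∀ C D, sepSetS (↑A) C.1 B.1 ⊆ sepSetS (↑A) D.1 B.1 → r C D)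
    -- the sections μ[A_X, A] for every flat X, with their defining property
    (μ : ∀ X : Set (Fin d → ℝ), ChamberS (subArr (↑A) X) → ChamberS (↑A : Set (HypPair d)))
    (hμsub : ∀ X C, (μ X C).1 ⊆ C.1)
    (hμmin : ∀ X C (K : ChamberS (↑A : Set (HypPair d))), K.1 ⊆ C.1 → r (μ X C) K)
    -- the projections σ_{A_X} : T(A) → T(A_X)
    (σ : ∀ X : Set (Fin d → ℝ), ChamberS (↑A : Set (HypPair d)) → ChamberS (subArr (↑A) X))
    (hσ : ∀ X K, K.1 ⊆ (σ X K).1) :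
    -- ξ_F is injective, with left inverse C ↦ (X_C, σ_{A_{X_C}}(C)) ...
    (∀ (X : Set (Fin d → ℝ)), IsFlatS (↑A) X →
      ∀ C : ChamberS (subArr (↑A) X),
        -- (X, C) ∈ Y_F : the critical flat of C in A_X (wrt the induced order) is the center
        IsCrit (subArr (↑A) X) (fun C₁ C₂ => r (μ X C₁) (μ X C₂)) C (centerOf (↑A) X) →
        ∀ XC : Set (Fin d → ℝ), IsCrit (↑A) r (μ X C) XC → XC = X ∧ σ X (μ X C) = C) ∧
    -- ... and surjective: every chamber K of A[F] is the image of (X_K, σ_{A_{X_K}}(K)) ∈ Y_F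
    (∀ (K : ChamberS (↑A : Set (HypPair d))) (XC : Set (Fin d → ℝ)),
      IsCrit (↑A) r K XC →
        IsCrit (subArr (↑A) XC) (fun C₁ C₂ => r (μ XC C₁) (μ XC C₂)) (σ XC K)
          (centerOf (↑A) XC) ∧
        μ XC (σ XC K) = K) := by

  haveI := hr
  have htrans : ∀ {a b c : ChamberS (↑A : Set (HypPair d))}, r a b → r b c → r a c :=
    fun {a b c} h1 h2 => IsTrans.trans a b c h1 h2
  have hanti : ∀ {a b : ChamberS (↑A : Set (HypPair d))}, r a b → r b a → a = b :=
    fun {a b} h1 h2 => Std.Antisymm.antisymm a b h1 h2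
  constructor
  · -- Part 1: injectivity with the stated left inverse
    intro X hXflat C hcrit XC hXC
    have hMC : (μ X C).1 ⊆ C.1 := hμsub X C
    -- X satisfies the defining property of the critical flat of μ X C in A
    have hprop : ∀ C' : ChamberS (↑A : Set (HypPair d)), r C' (μ X C) → C' ≠ μ X C →
        ∃ p ∈ (↑A : Set (HypPair d)), X ⊆ hypSet p ∧ Separates p (μ X C).1 C'.1 := by
      intro C' hrC' hne
      by_cases hDC : σ X C' = C
      · exact absurd (hanti hrC' (hμmin X C C' (hDC ▸ hσ X C'))) hne
      · have h2 : r (μ X (σ X C')) (μ X C) :=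
          htrans (hμmin X (σ X C') C' (hσ X C')) hrC'
        obtain ⟨p, hp, _, hsep⟩ := hcrit.1.2 (σ X C') h2 hDC
        exact ⟨p, hp.1, hp.2,
          sep_down hp C (σ X C') hMC (hσ X C') (chamber_ne _) (chamber_ne _) hsep⟩
    have hXsub : X ⊆ XC := hXC.2 X ⟨hXflat, hprop⟩
    -- XC is a flat of A_X satisfying the property for C, hence XC ⊆ center = X
    have hXCflatX : IsFlatS (subArr (↑A) X) XC := by
      obtain ⟨T, hTS, hTeq⟩ := hXC.1.1
      exact ⟨T, fun p hp => ⟨hTS hp, hXsub.trans (hTeq ▸ Set.biInter_subset_of_mem hp)⟩, hTeq⟩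
    have hXCprop : ∀ D : ChamberS (subArr (↑A) X), r (μ X D) (μ X C) → D ≠ C →
        ∃ p ∈ subArr (↑A) X, XC ⊆ hypSet p ∧ Separates p C.1 D.1 := by
      intro D hrD hDC
      have h3 : μ X D ≠ μ X C := by
        intro h
        obtain ⟨z, hz⟩ := chamber_ne (μ X D)
        exact hDC (chamber_eq _ _ (hμsub X D hz) (hMC (h ▸ hz)))
      obtain ⟨p, hp, hXCp, hsep⟩ := hXC.1.2 (μ X D) hrD h3
      exact ⟨p, ⟨hp, hXsub.trans hXCp⟩, hXCp, sep_up hsep hMC (hμsub X D)⟩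
    have hXCsub : XC ⊆ X := by
      have h := hcrit.2 XC ⟨hXCflatX, hXCprop⟩
      rwa [center_eq hXflat] at h
    refine ⟨Set.Subset.antisymm hXCsub hXsub, ?_⟩
    obtain ⟨z, hz⟩ := chamber_ne (μ X C)
    exact chamber_eq _ _ (hσ X (μ X C) hz) (hMC hz)
  · -- Part 2: surjectivity
    intro K XC hcrit
    have hXCflat : IsFlatS (↑A) XC := hcrit.1.1
    have hcen : centerOf (↑A) XC = XC := center_eq hXCflat
    have hKC : K.1 ⊆ (σ XC K).1 := hσ XC K
    have hμK : μ XC (σ XC K) = K := by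
      by_contra hne
      obtain ⟨p, hp, hXCp, hsep⟩ := hcrit.1.2 (μ XC (σ XC K)) (hμmin XC (σ XC K) K hKC) hne
      obtain ⟨x, hx, y, hy, hxy⟩ := hsep
      have := signConst (σ XC K) (p := p) ⟨hp, hXCp⟩ x (hKC hx) y (hμsub XC (σ XC K) hy)
      linarith
    refine ⟨⟨⟨⟨subArr (↑A) XC, subset_rfl, rfl⟩, ?_⟩, ?_⟩, hμK⟩
    · -- separation clause of IsCrit for σ XC K with flat the center
      intro D hrD hDC
      rw [hμK] at hrD
      have h3 : μ XC D ≠ K := by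
        intro h
        obtain ⟨z, hz⟩ := chamber_ne (μ XC D)
        exact hDC (chamber_eq _ _ (hμsub XC D hz) (hKC (h ▸ hz)))
      obtain ⟨p, hp, hXCp, hsep⟩ := hcrit.1.2 (μ XC D) hrD h3
      refine ⟨p, ⟨hp, hXCp⟩, ?_, sep_up hsep hKC (hμsub XC D)⟩
      rw [hcen]; exact hXCp
    · -- uniqueness clause
      rintro Y ⟨hYflat, hYprop⟩
      rw [hcen]
      obtain ⟨T, hTS, hTeq⟩ := hYflat
      have hYflatA : IsFlatS (↑A) Y := ⟨T, fun p hp => (hTS hp).1, hTeq⟩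
      refine hcrit.2 Y ⟨hYflatA, ?_⟩
      intro C' hrC' hne
      by_cases hDC : σ XC C' = σ XC K
      · refine absurd (hanti hrC' ?_) hne
        rw [← hμK]
        exact hμmin XC (σ XC K) C' (hDC ▸ hσ XC C')
      · have h2 : r (μ XC (σ XC C')) (μ XC (σ XC K)) := by
          rw [hμK]
          exact htrans (hμmin XC (σ XC C') C' (hσ XC C')) hrC'
        obtain ⟨p, hpX, hYp, hsep⟩ := hYprop (σ XC C') h2 hDC
        exact ⟨p, hpX.1, hYp,
          sep_down hpX (σ XC K) (σ XC C') hKC (hσ XC C') (chamber_ne _) (chamber_ne _) hsep⟩
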